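/- For the 2×2 matrices V = (1/√2)[[1,1],[−1,1]], D = diag(1, λ) with λ = exp(4πi/3), and U = diag(1,−1), the additive commutator of VDV^{-1} with U equals [[0, 1−λ],[λ−1, 0]], and hence ‖[VDV^{-1}, U]‖ ≥ |λ − 1| = |exp(4πi/3) − 1|. -/

import Mathlib

open Matrix

/-- The operator norm on `2×2` complex matrices. -/
noncomputable def opNorm {n : ℕ} (M : Matrix (Fin n) (Fin n) ℂ) : ℝ :=
  ‖Matrix.toEuclideanCLM (n := Fin n) (𝕜 := ℂ) M‖

lemma norm_lower_bound (C : Matrix (Fin 2) (Fin 2) ℂ) :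
    ‖C 1 0‖ ≤ opNorm C := by
  set f := Matrix.toEuclideanCLM (n := Fin 2) (𝕜 := ℂ) C
  set v : EuclideanSpace ℂ (Fin 2) := (WithLp.equiv 2 _).symm ![1, 0]
  have hv : ‖v‖ = 1 := by
    rw [EuclideanSpace.norm_eq]
    simp [v, Fin.sum_univ_two, WithLp.equiv_symm_apply]
  have hfv : f v = (WithLp.equiv 2 _).symm (C *ᵥ ![1, 0]) :=
    Matrix.toEuclideanCLM_toLp C ![1, 0]
  have hmv : C *ᵥ ![1, 0] = ![C 0 0, C 1 0] := by
    ext i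
    fin_cases i <;> simp [Matrix.mulVec, dotProduct, Fin.sum_univ_two]
  have hnorm : ‖f v‖ ≥ ‖C 1 0‖ := by
    rw [hfv, hmv, EuclideanSpace.norm_eq]
    simp only [WithLp.equiv_symm_apply, WithLp.ofLp_toLp, Fin.sum_univ_two]
    have h1 : ‖C 1 0‖ = Real.sqrt (‖(![C 0 0, C 1 0] : Fin 2 → ℂ) 1‖ ^ 2) := by
      simp [Real.sqrt_sq_eq_abs]
    rw [h1]
    apply Real.sqrt_le_sqrt
    have : (0:ℝ) ≤ ‖(![C 0 0, C 1 0] : Fin 2 → ℂ) 0‖ ^ 2 := sq_nonneg _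
    linarith
  calc ‖C 1 0‖ ≤ ‖f v‖ := hnorm
    _ ≤ ‖f‖ * ‖v‖ := f.le_opNorm v
    _ = opNorm C := by rw [hv, mul_one]; rfl

/-- For `V = (1/√2)[[1,1],[−1,1]]`, `D = diag(1, λ)` with `λ = exp(4πi/3)` and
`U = diag(1,−1)`, the additive commutator of `VDV⁻¹` with `U` equals
`[[0, 1−λ],[λ−1, 0]]`, hence `‖[VDV⁻¹, U]‖ ≥ |λ − 1| = |exp(4πi/3) − 1|`. -/
theorem stmt17 :
    ∀ lam V D U : _,
      lam = Complex.exp (4 * Real.pi * Complex.I / 3) →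
      V = ((Real.sqrt 2 : ℂ))⁻¹ • (!![1, 1; -1, 1] : Matrix (Fin 2) (Fin 2) ℂ) →
      D = (!![1, 0; 0, lam] : Matrix (Fin 2) (Fin 2) ℂ) →
      U = (!![1, 0; 0, -1] : Matrix (Fin 2) (Fin 2) ℂ) →
      (V * D * V⁻¹) * U - U * (V * D * V⁻¹) = !![0, 1 - lam; lam - 1, 0] ∧
      ‖lam - 1‖ ≤ opNorm ((V * D * V⁻¹) * U - U * (V * D * V⁻¹)) := by
  intro lam V D U hlam hV hD hU
  have hs : ((Real.sqrt 2 : ℂ)) * ((Real.sqrt 2 : ℂ)) = 2 := by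
    norm_cast; exact Real.mul_self_sqrt (by norm_num)
  have h2 : ((Real.sqrt 2 : ℂ))⁻¹ * ((Real.sqrt 2 : ℂ))⁻¹ = 2⁻¹ := by
    rw [← mul_inv, hs]
  set W : Matrix (Fin 2) (Fin 2) ℂ :=
    ((Real.sqrt 2 : ℂ))⁻¹ • !![1, -1; 1, 1] with hW
  have hVW : V * W = 1 := by
    rw [hV, hW, Matrix.smul_mul, Matrix.mul_smul, smul_smul, h2]
    ext i j
    fin_cases i <;> fin_cases j <;>
      simp [Matrix.mul_apply, Fin.sum_univ_two, Matrix.one_apply] <;> ring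
  have hVinv : V⁻¹ = W := Matrix.inv_eq_right_inv hVW
  have hM : V * D * V⁻¹ =
      (2:ℂ)⁻¹ • !![1 + lam, lam - 1; lam - 1, 1 + lam] := by
    rw [hVinv, hV, hD, hW, Matrix.smul_mul, Matrix.smul_mul, Matrix.mul_smul, smul_smul, h2]
    congr 1
    ext i j
    fin_cases i <;> fin_cases j <;>
      simp [Matrix.mul_apply, Fin.sum_univ_two] <;> ring
  have hcomm : (V * D * V⁻¹) * U - U * (V * D * V⁻¹) = !![0, 1 - lam; lam - 1, 0] := by
    rw [hM, hU]
    ext i j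
    fin_cases i <;> fin_cases j <;>
      simp [Matrix.mul_apply, Fin.sum_univ_two] <;> ring
  refine ⟨hcomm, ?_⟩
  rw [hcomm]
  have := norm_lower_bound !![0, 1 - lam; lam - 1, 0]
  simpa using this
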